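/- Let a > 0 and b > 0 be reals and let x_s, x_d ∈ ℝ² with ‖x_s − x_d‖ = 2d, d > 0. Then for every x ∈ ℝ², max(a·‖x_s − x‖, b·‖x − x_d‖) ≥ 2d·a·b/(a + b), and equality holds at the point x⋆ = (a·x_s + b·x_d)/(a + b), which lies on the segment joining x_s and x_d and satisfies a·‖x_s − x⋆‖ = b·‖x⋆ − x_d‖ and ‖x⋆ − x_d‖ = 2d·a/(a + b). Consequently the infimum over ℝ² of the heterogeneous relay selection function ŝ_diff(x) = max(a‖x_s − x‖, b‖x − x_d‖) equals 2d·a·b/(a + b). -/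

import Mathlib

open Real

/-- Heterogeneous relay selection function `ŝ_diff(x) = max (a‖xs − x‖) (b‖x − xd‖)` with
`a, b > 0` and `‖xs − xd‖ = 2d`: for every `x`,
`ŝ_diff(x) ≥ 2dab/(a+b)`, with equality at `x⋆ = (a xs + b xd)/(a+b)`, which lies on the
segment joining `xs` and `xd` and satisfies `a‖xs − x⋆‖ = b‖x⋆ − xd‖` and
`‖x⋆ − xd‖ = 2da/(a+b)`; consequently the infimum of `ŝ_diff` over `ℝ²` equals
`2dab/(a+b)`. -/
theorem heterogeneous_selection_infimum (a b d : ℝ) (ha : 0 < a) (hb : 0 < b) (hd : 0 < d)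
    (xs xd xstar : EuclideanSpace ℝ (Fin 2)) (hdist : ‖xs - xd‖ = 2 * d)
    (hxstar : xstar = (a / (a + b)) • xs + (b / (a + b)) • xd) :
    (∀ x : EuclideanSpace ℝ (Fin 2),
        2 * d * a * b / (a + b) ≤ max (a * ‖xs - x‖) (b * ‖x - xd‖)) ∧
    max (a * ‖xs - xstar‖) (b * ‖xstar - xd‖) = 2 * d * a * b / (a + b) ∧
    a * ‖xs - xstar‖ = b * ‖xstar - xd‖ ∧
    ‖xstar - xd‖ = 2 * d * a / (a + b) ∧
    xstar ∈ segment ℝ xs xd ∧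
    IsGLB (Set.range fun x : EuclideanSpace ℝ (Fin 2) =>
        max (a * ‖xs - x‖) (b * ‖x - xd‖)) (2 * d * a * b / (a + b)) := by
  have hab : 0 < a + b := by linarith
  have hlow : ∀ x : EuclideanSpace ℝ (Fin 2),
      2 * d * a * b / (a + b) ≤ max (a * ‖xs - x‖) (b * ‖x - xd‖) := by
    intro x
    set M := max (a * ‖xs - x‖) (b * ‖x - xd‖) with hM
    have h1 : a * ‖xs - x‖ ≤ M := le_max_left _ _
    have h2 : b * ‖x - xd‖ ≤ M := le_max_right _ _
    have htri : ‖xs - xd‖ ≤ ‖xs - x‖ + ‖x - xd‖ := norm_sub_le_norm_sub_add_norm_sub _ _ _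
    have hs : ‖xs - x‖ ≤ M / a := (le_div_iff₀ ha).2 (by linarith [mul_comm a ‖xs - x‖])
    have hx : ‖x - xd‖ ≤ M / b := (le_div_iff₀ hb).2 (by linarith [mul_comm b ‖x - xd‖])
    have : 2 * d ≤ M / a + M / b := by rw [← hdist]; linarith
    rw [div_le_iff₀ hab]
    have := mul_le_mul_of_nonneg_left this (by positivity : (0:ℝ) ≤ a * b)
    calc 2 * d * a * b = a * b * (2 * d) := by ring
      _ ≤ a * b * (M / a + M / b) := this
      _ = M * (a + b) := by field_simp; ring
  have hsd : xstar - xd = (a / (a + b)) • (xs - xd) := by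
    rw [hxstar]; match_scalars <;> field_simp <;> ring
  have hss : xs - xstar = (b / (a + b)) • (xs - xd) := by
    rw [hxstar]; match_scalars <;> field_simp <;> ring
  have hn1 : ‖xstar - xd‖ = 2 * d * a / (a + b) := by
    rw [hsd, norm_smul, Real.norm_eq_abs, abs_of_pos (by positivity), hdist]; ring
  have hn2 : ‖xs - xstar‖ = 2 * d * b / (a + b) := by
    rw [hss, norm_smul, Real.norm_eq_abs, abs_of_pos (by positivity), hdist]; ring
  have heq : a * ‖xs - xstar‖ = b * ‖xstar - xd‖ := by rw [hn1, hn2]; ring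
  have hval : a * ‖xs - xstar‖ = 2 * d * a * b / (a + b) := by rw [hn2]; ring
  refine ⟨hlow, ?_, heq, hn1, ?_, ?_⟩
  · rw [← heq, max_self, hval]
  · rw [hxstar]
    exact ⟨a / (a + b), b / (a + b), by positivity, by positivity,
      by field_simp, rfl⟩
  · constructor
    · rintro y ⟨x, rfl⟩
      exact hlow x
    · intro c hc
      have := hc ⟨xstar, rfl⟩
      simp only at this
      rwa [← heq, max_self, hval] at this
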